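/- For every natural number n, the number of abelian squares (w, w') of size n over a 3-letter alphabet with no position at which both w and w' have the letter 1 equals the n-th Franel number ∑_{k=0}^{n} C(n,k)^3. Formally: the number of pairs of words w, w' : Fin n → Fin 3 such that every letter c ∈ Fin 3 occurs equally often in w and in w', and there is no position i with w(i) = 0 and w'(i) = 0, equals ∑_{k=0}^{n} C(n,k)^3. -/

import Mathlib

open Finset

private def pInv : Bool → Bool → Bool → Fin 3 × Fin 3
  | true, false, true => (0, 1)
  | true, false, false => (0, 2)
  | false, true, false => (1, 0)
  | false, true, true => (2, 0)
  | false, false, false => (1, 1)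
  | true, true, true => (2, 2)
  | true, true, false => (1, 2)
  | false, false, true => (2, 1)

private lemma pw1 : ∀ a b : Fin 3, ¬(a = 0 ∧ b = 0) →
    ((if (a = 0 ∨ b = 2) then 1 else 0) + (if b = 0 then 1 else 0) : ℕ)
      = (if (¬a = 0 ∧ ¬b = 1) then 1 else 0) + (if a = 0 then 1 else 0) := by decide

private lemma pw2 : ∀ a b : Fin 3, ¬(a = 0 ∧ b = 0) →
    ((if (¬a = 0 ∧ ¬b = 1) then 1 else 0) + (if b = 1 then 1 else 0) : ℕ)
      = (if (a = 2 ∨ (a = 0 ∧ b = 1)) then 1 else 0) + (if a = 1 then 1 else 0) := by decide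

private lemma pwInv : ∀ a b : Fin 3, ¬(a = 0 ∧ b = 0) →
    pInv (decide (a = 0 ∨ b = 2)) (decide (¬a = 0 ∧ ¬b = 1))
      (decide (a = 2 ∨ (a = 0 ∧ b = 1))) = (a, b) := by decide

private lemma pwNo : ∀ x y z : Bool,
    ¬((pInv x y z).1 = 0 ∧ (pInv x y z).2 = 0) := by decide

private lemma pwX : ∀ x y z : Bool,
    ((pInv x y z).1 = 0 ∨ (pInv x y z).2 = 2) ↔ x = true := by decide

private lemma pwY : ∀ x y z : Bool,
    (¬(pInv x y z).1 = 0 ∧ ¬(pInv x y z).2 = 1) ↔ y = true := by decide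

private lemma pwZ : ∀ x y z : Bool,
    ((pInv x y z).1 = 2 ∨ ((pInv x y z).1 = 0 ∧ (pInv x y z).2 = 1)) ↔ z = true := by decide

private lemma pwSum : ∀ a : Fin 3,
    ((if a = 0 then 1 else 0) + (if a = 1 then 1 else 0) + (if a = 2 then 1 else 0) : ℕ) = 1 := by
  decide

theorem abelian_squares_no_common_one_eq_franel (n : ℕ) :
    ((Finset.univ : Finset ((Fin n → Fin 3) × (Fin n → Fin 3))).filter (fun p =>
        (∀ c : Fin 3,
          (Finset.univ.filter (fun i => p.1 i = c)).card
            = (Finset.univ.filter (fun i => p.2 i = c)).card) ∧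
        ¬ ∃ i : Fin n, p.1 i = 0 ∧ p.2 i = 0)).card
      = ∑ k ∈ range (n + 1), (n.choose k) ^ 3 := by
  classical
  -- the target set of triples of finsets
  set S₂ : Finset (Finset (Fin n) × Finset (Fin n) × Finset (Fin n)) :=
    univ.filter (fun t => t.1.card = t.2.1.card ∧ t.2.1.card = t.2.2.card) with hS₂
  -- counting helper
  have cntsum : ∀ w : Fin n → Fin 3,
      (univ.filter (fun i => w i = 0)).card + (univ.filter (fun i => w i = 1)).card
        + (univ.filter (fun i => w i = 2)).card = n := by
    intro w
    rw [card_filter, card_filter, card_filter, ← Finset.sum_add_distrib,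
      ← Finset.sum_add_distrib]
    simp [pwSum]
  -- the forward map
  set F : (Fin n → Fin 3) × (Fin n → Fin 3) →
      Finset (Fin n) × Finset (Fin n) × Finset (Fin n) :=
    fun p => (univ.filter (fun i => p.1 i = 0 ∨ p.2 i = 2),
      univ.filter (fun i => ¬p.1 i = 0 ∧ ¬p.2 i = 1),
      univ.filter (fun i => p.1 i = 2 ∨ (p.1 i = 0 ∧ p.2 i = 1))) with hF
  set G : Finset (Fin n) × Finset (Fin n) × Finset (Fin n) →
      (Fin n → Fin 3) × (Fin n → Fin 3) :=
    fun t => (fun i => (pInv (decide (i ∈ t.1)) (decide (i ∈ t.2.1)) (decide (i ∈ t.2.2))).1,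
      fun i => (pInv (decide (i ∈ t.1)) (decide (i ∈ t.2.1)) (decide (i ∈ t.2.2))).2) with hG
  -- key sum identities: for any p with no common zero
  have key1 : ∀ p : (Fin n → Fin 3) × (Fin n → Fin 3),
      (¬ ∃ i : Fin n, p.1 i = 0 ∧ p.2 i = 0) →
      (univ.filter (fun i => p.1 i = 0 ∨ p.2 i = 2)).card
          + (univ.filter (fun i => p.2 i = 0)).card
        = (univ.filter (fun i => ¬p.1 i = 0 ∧ ¬p.2 i = 1)).card
          + (univ.filter (fun i => p.1 i = 0)).card := by
    intro p hp
    rw [card_filter, card_filter, card_filter, card_filter, ← Finset.sum_add_distrib,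
      ← Finset.sum_add_distrib]
    exact Finset.sum_congr rfl (fun i _ => pw1 _ _ (fun h => hp ⟨i, h⟩))
  have key2 : ∀ p : (Fin n → Fin 3) × (Fin n → Fin 3),
      (¬ ∃ i : Fin n, p.1 i = 0 ∧ p.2 i = 0) →
      (univ.filter (fun i => ¬p.1 i = 0 ∧ ¬p.2 i = 1)).card
          + (univ.filter (fun i => p.2 i = 1)).card
        = (univ.filter (fun i => p.1 i = 2 ∨ (p.1 i = 0 ∧ p.2 i = 1))).card
          + (univ.filter (fun i => p.1 i = 1)).card := by
    intro p hp
    rw [card_filter, card_filter, card_filter, card_filter, ← Finset.sum_add_distrib,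
      ← Finset.sum_add_distrib]
    exact Finset.sum_congr rfl (fun i _ => pw2 _ _ (fun h => hp ⟨i, h⟩))
  have main : ((Finset.univ : Finset ((Fin n → Fin 3) × (Fin n → Fin 3))).filter (fun p =>
        (∀ c : Fin 3,
          (Finset.univ.filter (fun i => p.1 i = c)).card
            = (Finset.univ.filter (fun i => p.2 i = c)).card) ∧
        ¬ ∃ i : Fin n, p.1 i = 0 ∧ p.2 i = 0)).card = S₂.card := by
    apply Finset.card_nbij' F G
    · -- maps into S₂
      intro p hp
      simp only [mem_coe, mem_filter, mem_univ, true_and] at hp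
      obtain ⟨hc, hno⟩ := hp
      have h1 := key1 p hno
      have h2 := key2 p hno
      simp only [mem_coe, hS₂, hF, mem_filter, mem_univ, true_and]
      constructor
      · have := hc 0; omega
      · have := hc 1; omega
    · -- G maps into S₁
      intro t ht
      simp only [mem_coe, hS₂, mem_filter, mem_univ, true_and] at ht
      set p := G t with hp
      have hno : ¬ ∃ i : Fin n, p.1 i = 0 ∧ p.2 i = 0 := by
        rintro ⟨i, h⟩
        exact pwNo _ _ _ h
      -- the filters of p equal membership filters
      have e1 : (univ.filter (fun i => p.1 i = 0 ∨ p.2 i = 2)) = t.1 := by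
        ext i
        simp only [mem_filter, mem_univ, true_and, hp, hG]
        rw [pwX]
        simp
      have e2 : (univ.filter (fun i => ¬p.1 i = 0 ∧ ¬p.2 i = 1)) = t.2.1 := by
        ext i
        simp only [mem_filter, mem_univ, true_and, hp, hG]
        rw [pwY]
        simp
      have e3 : (univ.filter (fun i => p.1 i = 2 ∨ (p.1 i = 0 ∧ p.2 i = 1))) = t.2.2 := by
        ext i
        simp only [mem_filter, mem_univ, true_and, hp, hG]
        rw [pwZ]
        simp
      have h1 := key1 p hno
      have h2 := key2 p hno
      rw [e1, e2] at h1
      rw [e2, e3] at h2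
      have s1 := cntsum p.1
      have s2 := cntsum p.2
      simp only [mem_coe, mem_filter, mem_univ, true_and]
      refine ⟨?_, hno⟩
      have c0 : (univ.filter (fun i => p.1 i = 0)).card
          = (univ.filter (fun i => p.2 i = 0)).card := by omega
      have c1 : (univ.filter (fun i => p.1 i = 1)).card
          = (univ.filter (fun i => p.2 i = 1)).card := by omega
      have c2 : (univ.filter (fun i => p.1 i = 2)).card
          = (univ.filter (fun i => p.2 i = 2)).card := by omega
      intro c
      fin_cases c
      · exact c0
      · exact c1
      · exact c2
    · -- left inverse
      intro p hp
      simp only [mem_coe, mem_filter, mem_univ, true_and] at hp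
      obtain ⟨-, hno⟩ := hp
      have : ∀ i, (G (F p)).1 i = p.1 i ∧ (G (F p)).2 i = p.2 i := by
        intro i
        have h := pwInv (p.1 i) (p.2 i) (fun h => hno ⟨i, h⟩)
        simp only [hG, hF, mem_filter, mem_univ, true_and]
        constructor
        · rw [show (pInv (decide (p.1 i = 0 ∨ p.2 i = 2)) (decide (¬p.1 i = 0 ∧ ¬p.2 i = 1))
            (decide (p.1 i = 2 ∨ (p.1 i = 0 ∧ p.2 i = 1)))) = (p.1 i, p.2 i) from h]
        · rw [show (pInv (decide (p.1 i = 0 ∨ p.2 i = 2)) (decide (¬p.1 i = 0 ∧ ¬p.2 i = 1))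
            (decide (p.1 i = 2 ∨ (p.1 i = 0 ∧ p.2 i = 1)))) = (p.1 i, p.2 i) from h]
      exact Prod.ext (funext fun i => (this i).1) (funext fun i => (this i).2)
    · -- right inverse
      intro t ht
      have e1 : ((F (G t)).1 : Finset (Fin n)) = t.1 := by
        ext i
        simp only [hF, hG, mem_filter, mem_univ, true_and]
        rw [pwX]
        simp
      have e2 : ((F (G t)).2.1 : Finset (Fin n)) = t.2.1 := by
        ext i
        simp only [hF, hG, mem_filter, mem_univ, true_and]
        rw [pwY]
        simp
      have e3 : ((F (G t)).2.2 : Finset (Fin n)) = t.2.2 := by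
        ext i
        simp only [hF, hG, mem_filter, mem_univ, true_and]
        rw [pwZ]
        simp
      exact Prod.ext e1 (Prod.ext e2 e3)
  rw [main]
  -- now count S₂
  have fib : S₂.card = ∑ m ∈ range (n + 1), (S₂.filter (fun t => t.1.card = m)).card := by
    apply Finset.card_eq_sum_card_fiberwise
    intro t ht
    simp only [mem_coe, mem_range, Nat.lt_succ_iff]
    exact (Finset.card_le_univ _).trans (by simp)
  rw [fib]
  apply Finset.sum_congr rfl
  intro m hm
  have : S₂.filter (fun t => t.1.card = m)
      = (powersetCard m univ) ×ˢ ((powersetCard m univ) ×ˢ (powersetCard m univ)) := by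
    ext t
    simp only [hS₂, mem_filter, mem_univ, true_and, mem_product, mem_powersetCard]
    constructor
    · rintro ⟨⟨h1, h2⟩, h3⟩
      exact ⟨⟨subset_univ _, h3⟩, ⟨subset_univ _, by omega⟩, ⟨subset_univ _, by omega⟩⟩
    · rintro ⟨⟨-, h1⟩, ⟨-, h2⟩, ⟨-, h3⟩⟩
      exact ⟨⟨by omega, by omega⟩, h1⟩
  rw [this, card_product, card_product, card_powersetCard, card_univ, Fintype.card_fin]
  ring
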